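/- For λ > 0 and α ∈ (0,1], the function P(z) = exp(-λ(1-z)^α) is absolutely monotone appropriately, i.e., its power series expansion about z = 0 has nonnegative coefficients summing to 1, so P is a probability generating function. -/

import Mathlib

open Real

noncomputable section DSPGF

namespace DSPGF

/-- Coefficients of the series `1 - (1-z)^α`. -/
def bco (α : ℝ) : ℕ → ℝ
  | 0 => 0
  | 1 => α
  | (k+2) => bco α (k+1) * (((k:ℝ)+1) - α) / ((k:ℝ)+2)

lemma bco_zero (α : ℝ) : bco α 0 = 0 := rfl
lemma bco_one' (α : ℝ) : bco α 1 = α := rfl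

lemma bco_nonneg {α : ℝ} (hα0 : 0 < α) (hα1 : α ≤ 1) : ∀ k, 0 ≤ bco α k := by
  intro k
  induction k using Nat.strong_induction_on with
  | _ k ih =>
    match k with
    | 0 => exact le_refl _
    | 1 => exact hα0.le
    | (k+2) =>
      have h1 := ih (k+1) (by omega)
      have h2 : (0:ℝ) ≤ ((k:ℝ)+1) - α := by
        have : (0:ℝ) ≤ (k:ℝ) := Nat.cast_nonneg k
        linarith
      show 0 ≤ bco α (k+1) * (((k:ℝ)+1) - α) / ((k:ℝ)+2)
      positivity

lemma bco_le_one {α : ℝ} (hα0 : 0 < α) (hα1 : α ≤ 1) : ∀ k, bco α k ≤ 1 := by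
  intro k
  induction k using Nat.strong_induction_on with
  | _ k ih =>
    match k with
    | 0 => exact zero_le_one
    | 1 => exact hα1
    | (k+2) =>
      have h1 := ih (k+1) (by omega)
      have h0 := bco_nonneg hα0 hα1 (k+1)
      show bco α (k+1) * (((k:ℝ)+1) - α) / ((k:ℝ)+2) ≤ 1
      rw [div_le_one (by positivity)]
      nlinarith [Nat.cast_nonneg (α := ℝ) k]

lemma bco_rec {α : ℝ} (k : ℕ) (hk : 1 ≤ k) :
    ((k:ℝ)+1) * bco α (k+1) = ((k:ℝ) - α) * bco α k := by
  obtain ⟨j, rfl⟩ := Nat.exists_eq_add_of_le hk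
  have : bco α (1 + j + 1) = bco α (j+1) * (((j:ℝ)+1) - α) / ((j:ℝ)+2) := by
    rw [show 1 + j + 1 = j + 2 by omega]
    rfl
  rw [this, show 1 + j = j + 1 by omega]
  push_cast
  field_simp
  ring

lemma bco_abs {α : ℝ} (hα0 : 0 < α) (hα1 : α ≤ 1) (k : ℕ) : |bco α k| ≤ 1 := by
  rw [abs_le]; exact ⟨by linarith [bco_nonneg hα0 hα1 k], bco_le_one hα0 hα1 k⟩

/-- The sum function of the series. -/
def fb (α : ℝ) (y : ℝ) : ℝ := ∑' n, bco α n * y ^ n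

lemma summable_fb {α : ℝ} (hα0 : 0 < α) (hα1 : α ≤ 1) {y : ℝ} (hy : |y| < 1) :
    Summable (fun n => bco α n * y ^ n) := by
  apply Summable.of_norm_bounded (g := fun n => |y| ^ n) (summable_geometric_of_lt_one (abs_nonneg y) hy)
  intro n
  rw [norm_mul, norm_pow, norm_eq_abs (y), Real.norm_eq_abs]
  calc |bco α n| * |y| ^ n ≤ 1 * |y| ^ n := by
        apply mul_le_mul_of_nonneg_right (bco_abs hα0 hα1 n) (by positivity)
    _ = |y| ^ n := one_mul _

lemma summable_deriv {r : ℝ} (hr0 : 0 ≤ r) (hr : r < 1) :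
    Summable (fun n : ℕ => (n:ℝ) * r ^ (n - 1)) := by
  rw [← summable_nat_add_iff 1]
  have h1 : Summable (fun n : ℕ => (n:ℝ) ^ 1 * r ^ n) :=
    summable_pow_mul_geometric_of_norm_lt_one 1 (by rwa [Real.norm_eq_abs, abs_of_nonneg hr0])
  have h2 : Summable (fun n : ℕ => r ^ n) := summable_geometric_of_lt_one hr0 hr
  have := (h1.add h2)
  apply this.congr
  intro n
  simp [pow_one]
  ring

lemma summable_deriv' {α : ℝ} (hα0 : 0 < α) (hα1 : α ≤ 1) {y : ℝ} (hy : |y| < 1) :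
    Summable (fun n : ℕ => bco α n * ((n:ℝ) * y ^ (n - 1))) := by
  apply Summable.of_norm_bounded (g := fun n : ℕ => (n:ℝ) * |y| ^ (n-1))
    (summable_deriv (abs_nonneg y) hy)
  intro n
  rw [Real.norm_eq_abs, abs_mul, abs_mul, abs_pow]
  calc |bco α n| * (|(n:ℝ)| * |y| ^ (n-1)) ≤ 1 * ((n:ℝ) * |y| ^ (n-1)) := by
        apply mul_le_mul (bco_abs hα0 hα1 n) _ (by positivity) zero_le_one
        rw [abs_of_nonneg (Nat.cast_nonneg n)]
    _ = (n:ℝ) * |y| ^ (n-1) := one_mul _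

lemma hasDerivAt_fb {α : ℝ} (hα0 : 0 < α) (hα1 : α ≤ 1) {y : ℝ} (hy : |y| < 1) :
    HasDerivAt (fb α) (∑' n, bco α n * ((n:ℝ) * y ^ (n - 1))) y := by
  set r : ℝ := (|y| + 1) / 2 with hrdef
  have hr0 : 0 ≤ r := by positivity
  have hr1 : r < 1 := by rw [hrdef]; linarith
  have hyr : |y| < r := by rw [hrdef]; linarith
  apply hasDerivAt_tsum_of_isPreconnected
    (u := fun n : ℕ => (n:ℝ) * r ^ (n - 1)) (y₀ := 0)
    (summable_deriv hr0 hr1) (isOpen_Ioo (a := -r) (b := r))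
    (convex_Ioo _ _).isPreconnected
    (g := fun n x => bco α n * x ^ n) (g' := fun n x => bco α n * ((n:ℝ) * x ^ (n - 1)))
  · intro n x _
    exact (hasDerivAt_pow n x).const_mul (bco α n)
  · intro n x hx
    rw [Real.norm_eq_abs, abs_mul, abs_mul]
    have hxr : |x| ≤ r := by
      rw [abs_le]; exact ⟨(hx.1).le, (hx.2).le⟩
    have : |x ^ (n-1)| ≤ r ^ (n-1) := by
      rw [abs_pow]; exact pow_le_pow_left₀ (abs_nonneg x) hxr _
    calc |bco α n| * (|(n:ℝ)| * |x ^ (n-1)|) ≤ 1 * ((n:ℝ) * r ^ (n-1)) := by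
          apply mul_le_mul (bco_abs hα0 hα1 n) _ (by positivity) zero_le_one
          apply mul_le_mul (le_of_eq (abs_of_nonneg (Nat.cast_nonneg n))) this
            (abs_nonneg _) (Nat.cast_nonneg n)
      _ = (n:ℝ) * r ^ (n-1) := one_mul _
  · have hrpos : 0 < r := by rw [hrdef]; positivity
    exact Set.mem_Ioo.2 ⟨by linarith, hrpos⟩
  · apply summable_of_ne_finset_zero (s := {0})
    intro n hn
    simp only [Finset.mem_singleton] at hn
    rw [zero_pow hn, mul_zero]
  · exact Set.mem_Ioo.2 ⟨neg_lt_of_abs_lt hyr, lt_of_abs_lt hyr⟩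

lemma ode {α : ℝ} (hα0 : 0 < α) (hα1 : α ≤ 1) {y : ℝ} (hy : |y| < 1) :
    (1 - y) * (∑' n, bco α n * ((n:ℝ) * y ^ (n - 1))) = α * (1 - fb α y) := by
  set D := ∑' n, bco α n * ((n:ℝ) * y ^ (n - 1)) with hD
  have hS : HasSum (fun n => bco α n * ((n:ℝ) * y ^ (n - 1))) D :=
    (summable_deriv' hα0 hα1 hy).hasSum
  have hshift : HasSum (fun n => bco α (n+1) * (((n:ℝ)+1) * y ^ n)) D := by
    have := (hasSum_nat_add_iff' (f := fun n => bco α n * ((n:ℝ) * y ^ (n - 1))) 1).2 hS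
    simp only [Finset.range_one, Finset.sum_singleton, Nat.cast_zero, zero_mul, mul_zero,
      sub_zero] at this
    apply this.congr_fun
    intro n
    simp only [Nat.add_sub_cancel]
    push_cast
    ring
  have hyD : HasSum (fun n : ℕ => (n:ℝ) * bco α n * y ^ n) (y * D) := by
    apply (hS.mul_left y).congr_fun
    intro n
    match n with
    | 0 => simp
    | (k+1) => rw [pow_succ]; push_cast; ring
  have hL : HasSum (fun n => bco α (n+1) * (((n:ℝ)+1) * y ^ n) - (n:ℝ) * bco α n * y ^ n)
      (D - y * D) := hshift.sub hyD
  have h1 : HasSum (fun n => bco α n * y ^ n) (fb α y) := (summable_fb hα0 hα1 hy).hasSum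
  have hR : HasSum (fun n => (if n = 0 then α else 0) - α * (bco α n * y ^ n))
      (α - α * fb α y) := (hasSum_ite_eq 0 α).sub (h1.mul_left α)
  have heq : (fun n => bco α (n+1) * (((n:ℝ)+1) * y ^ n) - (n:ℝ) * bco α n * y ^ n)
      = (fun n => (if n = 0 then α else 0) - α * (bco α n * y ^ n)) := by
    funext n
    match n with
    | 0 => norm_num [bco_one', bco_zero]
    | (k+1) =>
      have hrec := bco_rec (α := α) (k+1) (by omega)
      have hif : (if k+1 = 0 then α else 0) = 0 := by simp
      rw [hif]
      push_cast at hrec ⊢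
      linear_combination y ^ (k+1) * hrec
  rw [heq] at hL
  have := hL.unique hR
  linarith [this]

lemma fb_eq {α : ℝ} (hα0 : 0 < α) (hα1 : α ≤ 1) {y : ℝ} (hy0 : 0 ≤ y) (hy : y < 1) :
    fb α y = 1 - (1 - y) ^ α := by
  set H : ℝ → ℝ := fun x => (1 - fb α x) * (1 - x) ^ (-α) with hHdef
  have key : ∀ x ∈ Set.Ioo (-1 : ℝ) 1, HasDerivAt H 0 x := by
    intro x hx
    have hx1 : |x| < 1 := abs_lt.2 ⟨hx.1, hx.2⟩
    have hpos : (0:ℝ) < 1 - x := by linarith [hx.2]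
    have hf := hasDerivAt_fb hα0 hα1 hx1
    have hbase : HasDerivAt (fun t : ℝ => t ^ (-α)) (-α * (1 - x) ^ (-α - 1)) (1 - x) :=
      Real.hasDerivAt_rpow_const (Or.inl (ne_of_gt hpos))
    have hinner : HasDerivAt (fun t : ℝ => 1 - t) (-1) x := by
      simpa using (hasDerivAt_id x).const_sub 1
    have hr : HasDerivAt (fun t : ℝ => (1 - t) ^ (-α))
        ((-α * (1 - x) ^ (-α - 1)) * (-1)) x := hbase.comp x hinner
    have hmul := ((hasDerivAt_const x (1:ℝ)).sub hf).mul hr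
    have hode := ode hα0 hα1 hx1
    have hsplit : (1 - x) ^ (-α) = (1 - x) ^ (-α - 1) * (1 - x) := by
      have h := Real.rpow_add hpos (-α-1) 1
      norm_num [Real.rpow_one] at h
      exact h
    convert hmul using 1
    · rfl
    · rfl
    · rfl
    rw [hsplit]
    set D := ∑' n, bco α n * ((n:ℝ) * x ^ (n - 1))
    have : (0 - D) * ((1 - x) ^ (-α - 1) * (1 - x)) = -((1-x) * D) * (1-x)^(-α-1) := by ring
    rw [this, hode]
    rw [Pi.sub_apply]
    ring
  have hcont : ContinuousOn H (Set.Icc 0 y) := by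
    intro t ht
    have : t ∈ Set.Ioo (-1:ℝ) 1 := ⟨by linarith [ht.1], by linarith [ht.2]⟩
    exact ((key t this).continuousAt).continuousWithinAt
  have hderiv : ∀ t ∈ Set.Ico 0 y, HasDerivWithinAt H 0 (Set.Ici t) t := by
    intro t ht
    have : t ∈ Set.Ioo (-1:ℝ) 1 := ⟨by linarith [ht.1], by linarith [ht.2]⟩
    exact (key t this).hasDerivWithinAt
  have hconst := constant_of_has_deriv_right_zero hcont hderiv y
    (Set.mem_Icc.2 ⟨hy0, le_refl y⟩)
  have hH0 : H 0 = 1 := by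
    have hfb0 : fb α 0 = 0 := by
      rw [fb]
      have : (fun n : ℕ => bco α n * (0:ℝ) ^ n) = fun _ => 0 := by
        funext n
        match n with
        | 0 => simp [bco_zero]
        | (k+1) => simp
      rw [this, tsum_zero]
    simp [hHdef, hfb0]
  rw [hH0] at hconst
  have hconst2 : (1 - fb α y) * (1 - y) ^ (-α) = 1 := hconst
  have hpos : (0:ℝ) < 1 - y := by linarith
  have hne : (1 - y) ^ α ≠ 0 := ne_of_gt (Real.rpow_pos_of_pos hpos α)
  have hinv : (1 - y) ^ (-α) = ((1 - y) ^ α)⁻¹ := Real.rpow_neg hpos.le α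
  rw [hinv] at hconst2
  field_simp at hconst2
  linarith [hconst2]

lemma seq_mem (j : ℕ) : (0:ℝ) ≤ 1 - 1/(j+1) ∧ (1 - 1/(j+1) : ℝ) < 1 := by
  constructor
  · have h1 : (1:ℝ) ≤ (j:ℝ)+1 := by linarith [Nat.cast_nonneg (α := ℝ) j]
    have : (1:ℝ)/((j:ℝ)+1) ≤ 1 := by
      rw [div_le_one (by positivity)]; exact h1
    linarith
  · have : (0:ℝ) < 1/((j:ℝ)+1) := by positivity
    linarith

lemma seq_tendsto : Filter.Tendsto (fun j : ℕ => (1 - 1/((j:ℝ)+1))) Filter.atTop (nhds 1) := by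
  have := tendsto_one_div_add_atTop_nhds_zero_nat (𝕜 := ℝ)
  have h := (tendsto_const_nhds (x := (1:ℝ)) (f := Filter.atTop (α := ℕ))).sub this
  simpa using h

lemma partial_le_one {α : ℝ} (hα0 : 0 < α) (hα1 : α ≤ 1) (N : ℕ) :
    ∑ k ∈ Finset.range N, bco α k ≤ 1 := by
  have hle : ∀ j : ℕ, ∑ k ∈ Finset.range N, bco α k * (1 - 1/((j:ℝ)+1)) ^ k ≤ 1 := by
    intro j
    obtain ⟨h0, h1⟩ := seq_mem j
    set z : ℝ := 1 - 1/((j:ℝ)+1)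
    have habs : |z| < 1 := by rw [abs_of_nonneg h0]; exact h1
    have h2 : ∑ k ∈ Finset.range N, bco α k * z ^ k ≤ fb α z := by
      apply Summable.sum_le_tsum _ _ (summable_fb hα0 hα1 habs)
      intro k _
      have := bco_nonneg hα0 hα1 k
      positivity
    have h3 : fb α z = 1 - (1-z)^α := fb_eq hα0 hα1 h0 h1
    have h4 : (0:ℝ) ≤ (1-z)^α := Real.rpow_nonneg (by linarith) α
    linarith
  have htend : Filter.Tendsto (fun j : ℕ => ∑ k ∈ Finset.range N, bco α k * (1 - 1/((j:ℝ)+1)) ^ k)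
      Filter.atTop (nhds (∑ k ∈ Finset.range N, bco α k)) := by
    have : Filter.Tendsto (fun j : ℕ => ∑ k ∈ Finset.range N, bco α k * (1 - 1/((j:ℝ)+1)) ^ k)
        Filter.atTop (nhds (∑ k ∈ Finset.range N, bco α k * 1 ^ k)) := by
      apply tendsto_finset_sum
      intro k _
      exact (seq_tendsto.pow k).const_mul (bco α k)
    simpa using this
  exact le_of_tendsto htend (Filter.Eventually.of_forall hle)

lemma summable_bco {α : ℝ} (hα0 : 0 < α) (hα1 : α ≤ 1) : Summable (bco α) :=
  summable_of_sum_range_le (bco_nonneg hα0 hα1) (partial_le_one hα0 hα1)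

lemma hasSum_bco_one {α : ℝ} (hα0 : 0 < α) (hα1 : α ≤ 1) : HasSum (bco α) 1 := by
  have hsum := summable_bco hα0 hα1
  set S := ∑' n, bco α n with hS
  have hle : S ≤ 1 := tsum_le_of_sum_range_le (bco_nonneg hα0 hα1) (partial_le_one hα0 hα1)
  have hge : 1 ≤ S := by
    have key : ∀ j : ℕ, 1 - (1/((j:ℝ)+1))^α ≤ S := by
      intro j
      obtain ⟨h0, h1⟩ := seq_mem j
      set z : ℝ := 1 - 1/((j:ℝ)+1)
      have habs : |z| < 1 := by rw [abs_of_nonneg h0]; exact h1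
      have h2 : fb α z ≤ S := by
        apply Summable.tsum_le_tsum _ (summable_fb hα0 hα1 habs) hsum
        intro k
        have hb := bco_nonneg hα0 hα1 k
        calc bco α k * z ^ k ≤ bco α k * 1 ^ k := by
              apply mul_le_mul_of_nonneg_left _ hb
              apply pow_le_pow_left₀ h0 (by linarith) k
          _ = bco α k := by rw [one_pow, mul_one]
      have h3 : fb α z = 1 - (1-z)^α := fb_eq hα0 hα1 h0 h1
      have h4 : (1 : ℝ) - z = 1/((j:ℝ)+1) := by ring
      rw [h3, h4] at h2
      exact h2
    have htend : Filter.Tendsto (fun j : ℕ => 1 - (1/((j:ℝ)+1))^α) Filter.atTop (nhds 1) := by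
      have h0 : Filter.Tendsto (fun j : ℕ => (1/((j:ℝ)+1))^α) Filter.atTop (nhds 0) := by
        have hb : Filter.Tendsto (fun j : ℕ => 1/((j:ℝ)+1)) Filter.atTop (nhds 0) :=
          tendsto_one_div_add_atTop_nhds_zero_nat
        have hc : ContinuousAt (fun t : ℝ => t ^ α) 0 :=
          Real.continuousAt_rpow_const 0 α (Or.inr hα0.le)
        have := hc.tendsto.comp hb
        simpa [Real.zero_rpow (ne_of_gt hα0), Function.comp_def] using this
      have := (tendsto_const_nhds (x := (1:ℝ)) (f := Filter.atTop (α := ℕ))).sub h0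
      simpa using this
    exact le_of_tendsto htend (Filter.Eventually.of_forall key)
  have : S = 1 := le_antisymm hle hge
  rw [← this]
  exact hsum.hasSum

/-- The binomial series on `[0,1]`. -/
lemma bco_hasSum {α : ℝ} (hα0 : 0 < α) (hα1 : α ≤ 1) {z : ℝ} (hz : z ∈ Set.Icc (0:ℝ) 1) :
    HasSum (fun k => bco α k * z ^ k) (1 - (1 - z) ^ α) := by
  obtain ⟨hz0, hz1⟩ := hz
  rcases eq_or_lt_of_le hz1 with heq | hlt
  · subst heq
    simp only [sub_self, Real.zero_rpow (ne_of_gt hα0), one_pow, mul_one, sub_zero]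
    exact hasSum_bco_one hα0 hα1
  · have habs : |z| < 1 := by rw [abs_of_nonneg hz0]; exact hlt
    have := (summable_fb hα0 hα1 habs).hasSum
    rwa [show (∑' n, bco α n * z ^ n) = fb α z from rfl, fb_eq hα0 hα1 hz0 hlt] at this

/-- Coefficients of the `n`-th convolution power. -/
def qc (α : ℝ) (n k : ℕ) : ℝ := PowerSeries.coeff k ((PowerSeries.mk (bco α)) ^ n)

lemma qc_nonneg {α : ℝ} (hα0 : 0 < α) (hα1 : α ≤ 1) : ∀ n k, 0 ≤ qc α n k := by
  intro n
  induction n with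
  | zero =>
    intro k
    rw [qc, pow_zero, PowerSeries.coeff_one]
    split <;> norm_num
  | succ n ih =>
    intro k
    rw [qc, pow_succ, PowerSeries.coeff_mul]
    apply Finset.sum_nonneg
    intro p _
    have h1 := ih p.1
    rw [qc] at h1
    have h2 := bco_nonneg hα0 hα1 p.2
    rw [← PowerSeries.coeff_mk p.2 (bco α)] at h2
    exact mul_nonneg h1 h2

lemma qc_eq_zero {α : ℝ} : ∀ n k, k < n → qc α n k = 0 := by
  intro n
  induction n with
  | zero => intro k hk; omega
  | succ n ih =>
    intro k hk
    rw [qc, pow_succ, PowerSeries.coeff_mul]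
    apply Finset.sum_eq_zero
    intro p hp
    rw [Finset.HasAntidiagonal.mem_antidiagonal] at hp
    rcases lt_or_ge p.1 n with h | h
    · have := ih p.1 h
      rw [qc] at this
      rw [this, zero_mul]
    · have hp2 : p.2 = 0 := by omega
      rw [hp2, PowerSeries.coeff_mk, bco_zero, mul_zero]

lemma qc_hasSum {α : ℝ} (hα0 : 0 < α) (hα1 : α ≤ 1) {z : ℝ} (hz : z ∈ Set.Icc (0:ℝ) 1) :
    ∀ n, HasSum (fun k => qc α n k * z ^ k) ((1 - (1 - z) ^ α) ^ n) := by
  set G := 1 - (1 - z) ^ α with hG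
  have hB := bco_hasSum hα0 hα1 hz
  intro n
  induction n with
  | zero =>
    rw [pow_zero]
    have : (fun k => qc α 0 k * z ^ k) = fun k => if k = 0 then 1 else 0 := by
      funext k
      rw [qc, pow_zero, PowerSeries.coeff_one]
      split
      · subst ‹k = 0›; simp
      · simp
    rw [this]
    exact hasSum_ite_eq 0 1
  | succ n ih =>
    have hf : Summable fun k => ‖qc α n k * z ^ k‖ := by
      apply ih.summable.congr
      intro k
      rw [Real.norm_eq_abs, abs_of_nonneg]
      exact mul_nonneg (qc_nonneg hα0 hα1 n k) (pow_nonneg hz.1 k)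
    have hg : Summable fun k => ‖bco α k * z ^ k‖ := by
      apply hB.summable.congr
      intro k
      rw [Real.norm_eq_abs, abs_of_nonneg]
      exact mul_nonneg (bco_nonneg hα0 hα1 k) (pow_nonneg hz.1 k)
    have hkey := hasSum_sum_range_mul_of_summable_norm hf hg
    rw [ih.tsum_eq, hB.tsum_eq] at hkey
    rw [pow_succ]
    apply hkey.congr_fun
    intro k
    rw [qc, pow_succ, PowerSeries.coeff_mul,
      Finset.Nat.sum_antidiagonal_eq_sum_range_succ_mk, Finset.sum_mul]
    apply Finset.sum_congr rfl
    intro i hi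
    rw [Finset.mem_range] at hi
    have : z ^ k = z ^ i * z ^ (k - i) := by
      rw [← pow_add]
      congr 1
      omega
    show qc α n i * PowerSeries.coeff (k-i) (PowerSeries.mk (bco α)) * z ^ k
      = qc α n i * z ^ i * (bco α (k-i) * z ^ (k-i))
    rw [PowerSeries.coeff_mk, this]
    ring

/-- The p.g.f. coefficients (compound Poisson). -/
def cc (lam α : ℝ) (k : ℕ) : ℝ :=
  Real.exp (-lam) * ∑ n ∈ Finset.range (k+1), lam ^ n / (n.factorial : ℝ) * qc α n k

lemma cc_nonneg {lam α : ℝ} (hlam : 0 < lam) (hα0 : 0 < α) (hα1 : α ≤ 1) (k : ℕ) :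
    0 ≤ cc lam α k := by
  apply mul_nonneg (Real.exp_nonneg _)
  apply Finset.sum_nonneg
  intro n _
  exact mul_nonneg (by positivity) (qc_nonneg hα0 hα1 n k)

lemma cc_hasSum {lam α : ℝ} (hlam : 0 < lam) (hα0 : 0 < α) (hα1 : α ≤ 1) {z : ℝ}
    (hz : z ∈ Set.Icc (0:ℝ) 1) :
    HasSum (fun k => cc lam α k * z ^ k) (Real.exp (-lam * (1 - z) ^ α)) := by
  set G : ℝ := 1 - (1 - z) ^ α with hGdef
  set F : ℕ × ℕ → ℝ := fun p => lam ^ p.1 / (p.1.factorial : ℝ) * qc α p.1 p.2 * z ^ p.2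
    with hFdef
  have hFnonneg : ∀ p, 0 ≤ F p := by
    intro p
    exact mul_nonneg (mul_nonneg (by positivity) (qc_nonneg hα0 hα1 _ _))
      (pow_nonneg hz.1 _)
  have hrow : ∀ n : ℕ, HasSum (fun k => F (n, k)) (lam ^ n / (n.factorial : ℝ) * G ^ n) := by
    intro n
    apply ((qc_hasSum hα0 hα1 hz n).mul_left (lam ^ n / (n.factorial : ℝ))).congr_fun
    intro k
    show lam ^ n / (n.factorial : ℝ) * qc α n k * z ^ k = _
    ring
  have hexp : HasSum (fun n : ℕ => lam ^ n / (n.factorial : ℝ) * G ^ n)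
      (Real.exp (lam * G)) := by
    have h := NormedSpace.exp_series_hasSum_exp' (𝕂 := ℝ) (lam * G)
    rw [← Real.exp_eq_exp_ℝ] at h
    apply h.congr_fun
    intro n
    rw [smul_eq_mul, mul_pow]
    field_simp
  have hFsummable : Summable F := by
    rw [summable_prod_of_nonneg hFnonneg]
    constructor
    · intro n
      exact (hrow n).summable
    · apply hexp.summable.congr
      intro n
      rw [(hrow n).tsum_eq]
  have hFS : HasSum F (Real.exp (lam * G)) := by
    have hF := hFsummable.hasSum
    have := (hF.prod_fiberwise hrow).unique hexp
    rwa [← this]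
  have hswap : HasSum (F ∘ ⇑(Equiv.prodComm ℕ ℕ)) (Real.exp (lam * G)) :=
    ((Equiv.prodComm ℕ ℕ).hasSum_iff).mpr hFS
  have hcol : ∀ k : ℕ, HasSum (fun n => F (n, k))
      ((∑ n ∈ Finset.range (k+1), lam ^ n / (n.factorial : ℝ) * qc α n k) * z ^ k) := by
    intro k
    rw [Finset.sum_mul]
    apply hasSum_sum_of_ne_finset_zero (s := Finset.range (k+1))
    intro n hn
    rw [Finset.mem_range, not_lt] at hn
    have : qc α n k = 0 := qc_eq_zero n k (by omega)
    show lam ^ n / (n.factorial : ℝ) * qc α n k * z ^ k = 0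
    rw [this, mul_zero, zero_mul]
  have hmain : HasSum (fun k => (∑ n ∈ Finset.range (k+1),
      lam ^ n / (n.factorial : ℝ) * qc α n k) * z ^ k) (Real.exp (lam * G)) :=
    hswap.prod_fiberwise hcol
  have := hmain.mul_left (Real.exp (-lam))
  have hval : Real.exp (-lam) * Real.exp (lam * G) = Real.exp (-lam * (1 - z) ^ α) := by
    rw [← Real.exp_add]
    congr 1
    rw [hGdef]
    ring
  rw [hval] at this
  apply this.congr_fun
  intro k
  rw [cc]
  ring

end DSPGF

end DSPGF

theorem discrete_stable_is_pgf (lam α : ℝ) (hlam : 0 < lam)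
    (hα : α ∈ Set.Ioc (0 : ℝ) 1) :
    ∃ c : ℕ → ℝ, (∀ k, 0 ≤ c k) ∧ HasSum c 1 ∧
      ∀ z ∈ Set.Icc (0 : ℝ) 1,
        HasSum (fun k : ℕ => c k * z ^ k) (Real.exp (-lam * (1 - z) ^ α)) := by
  obtain ⟨hα0, hα1⟩ := hα
  refine ⟨DSPGF.cc lam α, DSPGF.cc_nonneg hlam hα0 hα1, ?_,
    fun z hz => DSPGF.cc_hasSum hlam hα0 hα1 hz⟩
  have h := DSPGF.cc_hasSum hlam hα0 hα1 (z := 1) (Set.mem_Icc.2 ⟨zero_le_one, le_refl 1⟩)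
  simp only [one_pow, mul_one, sub_self, Real.zero_rpow (ne_of_gt hα0), mul_zero,
    Real.exp_zero] at h
  exact h
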